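/- Let L ≥ 1, rates R_1,…,R_L > 0, and positive coefficients c_1 ≥ c_2 ≥ … ≥ c_L > 0 (c_l = w_l/Γ_l). Define f(t) = t·[ c_1(2^{R_1/t} − 1) + Σ_{l=2}^L c_l(2^{R_l/t} − 1)·2^{Σ_{j=1}^{l−1} R_j/t} ] for t > 0. Then f is strictly convex on (0, ∞). -/

import Mathlib

open Real Set Finset

private lemma deriv1 (p t : ℝ) (ht : t ≠ 0) :
    HasDerivAt (fun t : ℝ => t * exp (p / t)) (exp (p / t) * (1 - p / t)) t := by
  have h1 : HasDerivAt (fun t : ℝ => p / t) (-(p / t ^ 2)) t := by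
    simpa [div_eq_mul_inv, mul_comm] using (hasDerivAt_inv ht).const_mul p
  have h2 := h1.exp
  have h3 := (hasDerivAt_id t).fun_mul h2
  refine h3.congr_deriv ?_
  simp only [id_eq]
  field_simp
  ring

private lemma deriv2 (p t : ℝ) (ht : t ≠ 0) :
    HasDerivAt (fun t : ℝ => exp (p / t) * (1 - p / t)) (exp (p / t) * (p ^ 2 / t ^ 3)) t := by
  have h1 : HasDerivAt (fun t : ℝ => p / t) (-(p / t ^ 2)) t := by
    simpa [div_eq_mul_inv, mul_comm] using (hasDerivAt_inv ht).const_mul p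
  have h2 := h1.exp
  have h4 := h1.const_sub 1
  have h5 := h2.fun_mul h4
  refine h5.congr_deriv ?_
  field_simp
  ring

private lemma strict_diff (p q : ℝ) (hq : 0 ≤ q) (hpq : q < p) :
    StrictConvexOn ℝ (Ioi (0:ℝ)) (fun t : ℝ => t * exp (p / t) - t * exp (q / t)) := by
  apply strictConvexOn_of_deriv2_pos (convex_Ioi 0)
  · apply ContinuousOn.sub
    all_goals
      exact continuousOn_id.mul
        (ContinuousOn.rexp (continuousOn_const.div continuousOn_id fun x hx => ne_of_gt hx))
  · intro x hx
    rw [interior_Ioi] at hx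
    have hx0 : (0:ℝ) < x := hx
    have hψ1 : ∀ t : ℝ, t ≠ 0 → HasDerivAt (fun t : ℝ => t * exp (p / t) - t * exp (q / t))
        (exp (p / t) * (1 - p / t) - exp (q / t) * (1 - q / t)) t :=
      fun t ht => (deriv1 p t ht).sub (deriv1 q t ht)
    have hev : deriv (fun t : ℝ => t * exp (p / t) - t * exp (q / t)) =ᶠ[nhds x]
        (fun t : ℝ => exp (p / t) * (1 - p / t) - exp (q / t) * (1 - q / t)) := by
      filter_upwards [compl_singleton_mem_nhds hx0.ne'] with t ht
      exact (hψ1 t ht).deriv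
    have h2 : HasDerivAt (fun t : ℝ => exp (p / t) * (1 - p / t) - exp (q / t) * (1 - q / t))
        (exp (p / x) * (p ^ 2 / x ^ 3) - exp (q / x) * (q ^ 2 / x ^ 3)) x :=
      (deriv2 p x hx0.ne').sub (deriv2 q x hx0.ne')
    have : (deriv^[2] (fun t : ℝ => t * exp (p / t) - t * exp (q / t))) x
        = exp (p / x) * (p ^ 2 / x ^ 3) - exp (q / x) * (q ^ 2 / x ^ 3) := by
      simp only [Function.iterate_succ, Function.iterate_zero, Function.comp_apply, id]
      rw [hev.deriv_eq]
      exact h2.deriv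
    rw [this]
    have hx3 : (0:ℝ) < x ^ 3 := by positivity
    have he : exp (q / x) < exp (p / x) :=
      exp_lt_exp.2 (by gcongr)
    have hsq : q ^ 2 < p ^ 2 := by nlinarith
    have h1 : exp (q / x) * q ^ 2 < exp (p / x) * p ^ 2 := by
      nlinarith [exp_pos (q / x), exp_pos (p / x)]
    have : exp (q / x) * (q ^ 2 / x ^ 3) < exp (p / x) * (p ^ 2 / x ^ 3) := by
      rw [mul_div_assoc', mul_div_assoc']
      exact (div_lt_div_iff_of_pos_right hx3).2 h1
    linarith

private lemma sc_smul {s : Set ℝ} {f : ℝ → ℝ} (a : ℝ) (ha : 0 < a)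
    (hf : StrictConvexOn ℝ s f) : StrictConvexOn ℝ s (fun x => a * f x) := by
  refine ⟨hf.1, fun x hx y hy hxy μ ν hμ hν hs => ?_⟩
  have := hf.2 hx hy hxy hμ hν hs
  simp only [smul_eq_mul] at *
  nlinarith

private lemma sc_congr {s : Set ℝ} {f g : ℝ → ℝ} (h : ∀ x ∈ s, f x = g x)
    (hf : StrictConvexOn ℝ s f) : StrictConvexOn ℝ s g := by
  refine ⟨hf.1, fun x hx y hy hxy a b ha hb hab => ?_⟩
  rw [← h _ hx, ← h _ hy, ← h _ (hf.1 hx hy ha.le hb.le hab)]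
  exact hf.2 hx hy hxy ha hb hab

private lemma sc_sum (n : ℕ) (hn : 1 ≤ n) (φ : ℕ → ℝ → ℝ)
    (h : ∀ l < n, StrictConvexOn ℝ (Ioi (0:ℝ)) (φ l)) :
    StrictConvexOn ℝ (Ioi (0:ℝ)) (fun t => ∑ l ∈ range n, φ l t) := by
  induction n with
  | zero => omega
  | succ m ih =>
    rcases Nat.eq_or_lt_of_le hn with h1 | h1
    · have : ∀ t : ℝ, ∑ l ∈ range (m+1), φ l t = φ 0 t := by
        intro t; rw [← h1]; simp
      simpa [this] using (h 0 (by omega))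
    · simp only [Finset.sum_range_succ]
      exact (ih (by omega) fun l hl => h l (by omega)).add (h m (by omega))

/-- The per-group resource-allocation cost `f_g` is strictly convex on `(0, ∞)`. -/
theorem stmt_9 (L : ℕ) (hL : 1 ≤ L) (R c : ℕ → ℝ)
    (hR : ∀ l < L, 0 < R l) (hc : ∀ l < L, 0 < c l)
    (hmono : ∀ l, l + 1 < L → c (l + 1) ≤ c l) :
    StrictConvexOn ℝ (Ioi 0)
      (fun t : ℝ => t * ∑ l ∈ range L,
        c l * ((2:ℝ) ^ (R l / t) - 1) * (2:ℝ) ^ ((∑ j ∈ range l, R j) / t)) := by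
  set S : ℕ → ℝ := fun l => ∑ j ∈ range l, R j with hSdef
  apply sc_congr (f := fun t => ∑ l ∈ range L,
    c l * (t * exp ((log 2 * (S l + R l)) / t) - t * exp ((log 2 * S l) / t)))
  · intro t ht
    have ht0 : (0:ℝ) < t := ht
    rw [Finset.mul_sum]
    refine Finset.sum_congr rfl fun l _ => ?_
    rw [rpow_def_of_pos two_pos, rpow_def_of_pos two_pos]
    have e1 : (log 2 * (S l + R l)) / t = log 2 * (R l / t) + log 2 * (S l / t) := by
      field_simp; ring
    have e2 : (log 2 * S l) / t = log 2 * (S l / t) := mul_div_assoc _ _ _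
    rw [e1, e2, exp_add]
    ring
  · apply sc_sum L hL
    intro l hl
    exact sc_smul _ (hc l hl) (strict_diff _ _
      (mul_nonneg (log_pos one_lt_two).le
        (Finset.sum_nonneg fun j hj => (hR j (lt_of_lt_of_le (mem_range.1 hj) hl.le)).le))
      (mul_lt_mul_of_pos_left (lt_add_of_pos_right _ (hR l hl)) (log_pos one_lt_two)))
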